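/- Let g(x) = min(a + Σ_i c_i x_i, b) with a, b ∈ ℝ, c_i ≥ 0, and x binary, and let β ≥ 0 be bounded by β̄. Then the product g(x)·β equals Υ where Υ is characterized by the mixed-integer constraints: there exists a binary a' and auxiliary products Φ_i = x_i β (McCormick-linearized) such that Σ_i c_i x_i ≤ (b−a) + M a', Σ_i c_i x_i ≥ (b−a) − M(1−a'), Σ_i c_i Φ_i + aβ ≤ Υ + M a', bβ ≤ Υ + M(1−a'), for sufficiently large M, when the objective minimizes Υ. Specifically, the constraint system admits a feasible Υ with Υ = g(x)·β, and any feasible Υ satisfies Υ ≥ g(x)·β when strict comparison Σ_i c_i x_i ≠ b−a holds. -/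
import Mathlib


/-- Big-M linearization of the product `g(x)·β` where
`g(x) = min(a + Σ_i c_i x_i, b)`, `x` binary, `β ∈ [0, β̄]`.
The constraint system (with McCormick-exact products `Φ_i = x_i β`) admits a
feasible binary `a'` and `Υ = g(x)·β`; and any feasible `(a', Υ)` satisfies
`Υ ≥ g(x)·β` whenever `Σ_i c_i x_i ≠ b − a`. -/
theorem bigM_min_product_linearization {n : ℕ}
    (a b βbar β M : ℝ) (c x : Fin n → ℝ)
    (hc : ∀ i, 0 ≤ c i) (hx : ∀ i, x i = 0 ∨ x i = 1)
    (hβ : β ∈ Set.Icc 0 βbar)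
    (hM : (∑ i, c i) + |b - a| + (|a| + |b| + ∑ i, c i) * βbar ≤ M) :
    (∃ a' : ℝ, (a' = 0 ∨ a' = 1) ∧
      (∑ i, c i * x i) ≤ (b - a) + M * a' ∧
      (b - a) - M * (1 - a') ≤ ∑ i, c i * x i ∧
      (∑ i, c i * (x i * β)) + a * β ≤ min (a + ∑ i, c i * x i) b * β + M * a' ∧
      b * β ≤ min (a + ∑ i, c i * x i) b * β + M * (1 - a')) ∧
    (∀ a' Υ : ℝ, (a' = 0 ∨ a' = 1) →
      (∑ i, c i * x i) ≤ (b - a) + M * a' →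
      (b - a) - M * (1 - a') ≤ ∑ i, c i * x i →
      (∑ i, c i * (x i * β)) + a * β ≤ Υ + M * a' →
      b * β ≤ Υ + M * (1 - a') →
      (∑ i, c i * x i) ≠ b - a →
      min (a + ∑ i, c i * x i) b * β ≤ Υ) := by
  obtain ⟨hβ0, hββ⟩ := hβ
  have hβbar : 0 ≤ βbar := le_trans hβ0 hββ
  set S := ∑ i, c i * x i with hS
  have hS0 : 0 ≤ S := Finset.sum_nonneg fun i _ => by
    rcases hx i with h | h <;> simp [h, hc i]
  have hS1 : S ≤ ∑ i, c i := Finset.sum_le_sum fun i _ => by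
    rcases hx i with h | h <;> simp [h, hc i]
  have hsum : (∑ i, c i * (x i * β)) = S * β := by
    rw [hS, Finset.sum_mul]; congr 1; ext i; ring
  have hcsum : 0 ≤ ∑ i, c i := Finset.sum_nonneg fun i _ => hc i
  have habs1 : b - a ≤ |b - a| := le_abs_self _
  have habs2 : -(b - a) ≤ |b - a| := neg_le_abs _
  have habs3 : |b - a| ≤ |a| + |b| := by
    calc |b - a| ≤ |b| + |a| := abs_sub _ _
    _ = |a| + |b| := by ring
  have ha1 : a ≤ |a| := le_abs_self _
  have ha2 : -a ≤ |a| := neg_le_abs _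
  have hb1 : b ≤ |b| := le_abs_self _
  have hb2 : -b ≤ |b| := neg_le_abs _
  have habs0 : (0:ℝ) ≤ |a| + |b| + ∑ i, c i := by positivity
  have hprodnn : 0 ≤ (|a| + |b| + ∑ i, c i) * βbar := mul_nonneg habs0 hβbar
  constructor
  · by_cases hcase : S ≤ b - a
    · refine ⟨0, Or.inl rfl, ?_, ?_, ?_, ?_⟩
      · linarith
      · linarith
      · have hmin : min (a + S) b = a + S := min_eq_left (by linarith)
        rw [hmin, hsum]; ring_nf; linarith
      · have hmin : min (a + S) b = a + S := min_eq_left (by linarith)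
        have hkey : (b - a - S) * β ≤ (|a| + |b| + ∑ i, c i) * βbar :=
          mul_le_mul (by linarith) hββ hβ0 habs0
        rw [hmin]; nlinarith
    · push_neg at hcase
      refine ⟨1, Or.inr rfl, ?_, ?_, ?_, ?_⟩
      · linarith
      · linarith
      · have hmin : min (a + S) b = b := min_eq_right (by linarith)
        have hkey : (a + S - b) * β ≤ (|a| + |b| + ∑ i, c i) * βbar :=
          mul_le_mul (by linarith) hββ hβ0 habs0
        rw [hmin, hsum]; nlinarith
      · have hmin : min (a + S) b = b := min_eq_right (by linarith)
        rw [hmin]; linarith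
  · intro a' Υ ha' h1 h2 h3 h4 hne
    rcases ha' with h | h
    · subst h
      have hlt : S < b - a := lt_of_le_of_ne (by linarith) hne
      have hmin : min (a + S) b = a + S := min_eq_left (by linarith)
      rw [hmin]
      rw [hsum] at h3
      nlinarith
    · subst h
      have hge : b - a ≤ S := by linarith
      have hmin : min (a + S) b = b := min_eq_right (by linarith)
      rw [hmin]; linarith
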